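/- arXiv:1709.04378 — 4 statements merged into one kernel-verified Lean document; each statement's English description precedes it below -/
import Mathlib

section
/- Let d ≥ 2. There is a constant c < ∞ depending only on d such that for every bounded set A ⊆ ℝ^d, every 0 < ρ < 1, every maximal ρ-separated subset A^ρ of A, and every y ∈ A^ρ, one has Σ_{x ∈ A^ρ, dist(y,x) > 1} dist(y,x)^{1-d} ≤ c ρ^{-d} |A^ρ|^{1/d}, where |A^ρ| denotes the cardinality of A^ρ. -/
/-- A set `S` is `ρ`-separated if any two distinct points of `S` are at distance at least `ρ`. -/
def IsSep {E : Type*} [PseudoMetricSpace E] (ρ : ℝ) (S : Set E) : Prop :=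
  ∀ x ∈ S, ∀ y ∈ S, x ≠ y → ρ ≤ dist x y

/-- The packing number `N_ρ(A)`: the maximal cardinality of a `ρ`-separated subset of `A`. -/
noncomputable def packNum {E : Type*} [PseudoMetricSpace E] (ρ : ℝ) (A : Set E) : ℕ :=
  sSup {n : ℕ | ∃ S : Finset E, ↑S ⊆ A ∧ IsSep ρ (S : Set E) ∧ S.card = n}

open Metric MeasureTheory Finset
open scoped ENNReal

/-- Volume packing bound: the number of points of a `ρ`-separated set within distance `r` of a
point `y` is at most `(2r / (ρ/2))^d`. -/
lemma count_le_aux {d : ℕ} (hd : 1 ≤ d) {ρ : ℝ} (hρ : 0 < ρ)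
    {S : Finset (EuclideanSpace ℝ (Fin d))}
    (hsep : IsSep ρ (S : Set (EuclideanSpace ℝ (Fin d))))
    (y : EuclideanSpace ℝ (Fin d)) {r : ℝ} (hr : ρ ≤ r) :
    ((S.filter (fun x => dist y x ≤ r)).card : ℝ) * (ρ / 2) ^ d ≤ (2 * r) ^ d := by
  classical
  haveI : Nontrivial (EuclideanSpace ℝ (Fin d)) := by
    refine Module.nontrivial_of_finrank_pos (R := ℝ) ?_
    rw [finrank_euclideanSpace_fin]; omega
  set T := S.filter (fun x => dist y x ≤ r) with hT
  have hρr : 0 < r := lt_of_lt_of_le hρ hr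
  -- disjointness of balls of radius ρ/2
  have hdisj : (T : Set (EuclideanSpace ℝ (Fin d))).PairwiseDisjoint
      (fun x => ball x (ρ / 2)) := by
    intro a ha b hb hab
    have haS : a ∈ S := (Finset.mem_filter.1 (by exact_mod_cast ha)).1
    have hbS : b ∈ S := (Finset.mem_filter.1 (by exact_mod_cast hb)).1
    exact ball_disjoint_ball (by
      have := hsep a haS b hbS hab
      linarith)
  have hsub : ∀ x ∈ T, ball x (ρ / 2) ⊆ ball y (2 * r) := by
    intro x hx z hz
    have hxr : dist y x ≤ r := (Finset.mem_filter.1 hx).2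
    have hzx : dist z x < ρ / 2 := mem_ball.1 hz
    have : dist z y < 2 * r := by
      calc dist z y ≤ dist z x + dist x y := dist_triangle z x y
        _ < ρ / 2 + r := by rw [dist_comm x y]; linarith
        _ ≤ 2 * r := by linarith
    exact mem_ball.2 this
  have hmeas : volume (⋃ x ∈ T, ball x (ρ / 2)) = ∑ x ∈ T, volume (ball x (ρ / 2)) :=
    measure_biUnion_finset hdisj (fun x _ => measurableSet_ball)
  have hball : ∀ x : EuclideanSpace ℝ (Fin d),
      volume (ball x (ρ / 2)) = ENNReal.ofReal ((ρ / 2) ^ d) * volume (ball (0 : EuclideanSpace ℝ (Fin d)) 1) := by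
    intro x
    rw [Measure.addHaar_ball volume x (by positivity : (0:ℝ) ≤ ρ / 2),
      finrank_euclideanSpace_fin]
  have hbally : volume (ball y (2 * r)) = ENNReal.ofReal ((2 * r) ^ d) * volume (ball (0 : EuclideanSpace ℝ (Fin d)) 1) := by
    rw [Measure.addHaar_ball volume y (by positivity : (0:ℝ) ≤ 2 * r),
      finrank_euclideanSpace_fin]
  have hle : (T.card : ℝ≥0∞) * (ENNReal.ofReal ((ρ / 2) ^ d) * volume (ball (0 : EuclideanSpace ℝ (Fin d)) 1))
      ≤ ENNReal.ofReal ((2 * r) ^ d) * volume (ball (0 : EuclideanSpace ℝ (Fin d)) 1) := by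
    calc (T.card : ℝ≥0∞) * (ENNReal.ofReal ((ρ / 2) ^ d) * volume (ball (0 : EuclideanSpace ℝ (Fin d)) 1))
        = ∑ x ∈ T, volume (ball x (ρ / 2)) := by
          rw [Finset.sum_congr rfl (fun x _ => hball x), Finset.sum_const, nsmul_eq_mul]
      _ = volume (⋃ x ∈ T, ball x (ρ / 2)) := hmeas.symm
      _ ≤ volume (ball y (2 * r)) := by
          apply measure_mono
          exact Set.iUnion₂_subset hsub
      _ = ENNReal.ofReal ((2 * r) ^ d) * volume (ball (0 : EuclideanSpace ℝ (Fin d)) 1) := hbally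
  have hK0 : volume (ball (0 : EuclideanSpace ℝ (Fin d)) 1) ≠ 0 :=
    (measure_ball_pos volume 0 one_pos).ne'
  have hKt : volume (ball (0 : EuclideanSpace ℝ (Fin d)) 1) ≠ ⊤ :=
    measure_ball_lt_top.ne
  rw [← mul_assoc] at hle
  have hle2 : (T.card : ℝ≥0∞) * ENNReal.ofReal ((ρ / 2) ^ d) ≤ ENNReal.ofReal ((2 * r) ^ d) :=
    (ENNReal.mul_le_mul_iff_left hK0 hKt).1 hle
  have : ENNReal.ofReal ((T.card : ℝ) * (ρ / 2) ^ d) ≤ ENNReal.ofReal ((2 * r) ^ d) := by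
    rwa [ENNReal.ofReal_mul (by positivity), ENNReal.ofReal_natCast]
  exact (ENNReal.ofReal_le_ofReal_iff (by positivity)).1 this

/-- Telescoping bound on the sum `∑ (k+1)^(1/d - 1)`. -/
lemma sum_rpow_aux {d : ℕ} (hd : 1 ≤ d) (n : ℕ) :
    ∑ k ∈ Finset.range n, ((k : ℝ) + 1) ^ ((1 : ℝ) / d - 1)
      ≤ d * (n : ℝ) ^ ((1 : ℝ) / d) := by
  have hd0 : (0 : ℝ) < d := by exact_mod_cast hd
  set β : ℝ := 1 / d with hβ
  have hβ0 : 0 < β := by positivity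
  have hβ1 : β ≤ 1 := by
    rw [hβ, div_le_one hd0]; exact_mod_cast hd
  induction n with
  | zero => simp only [Finset.range_zero, Finset.sum_empty]; positivity
  | succ n ih =>
    rw [Finset.sum_range_succ]
    have key : ((n : ℝ) + 1) ^ (β - 1) ≤ d * (((n : ℝ) + 1) ^ β - (n : ℝ) ^ β) := by
      have hn1 : (0 : ℝ) < (n : ℝ) + 1 := by positivity
      -- Bernoulli: (1 + s)^β ≤ 1 + β s  with  s = -1/(n+1)
      have hb := rpow_one_add_le_one_add_mul_self
        (s := -(1 / ((n : ℝ) + 1))) (p := β)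
        (by rw [neg_le, neg_neg]; rw [div_le_one hn1]; linarith) hβ0.le hβ1
      have h1 : (1 : ℝ) + -(1 / ((n : ℝ) + 1)) = (n : ℝ) / ((n : ℝ) + 1) := by
        field_simp
        ring
      rw [h1] at hb
      -- hb : ((n:ℝ)/((n:ℝ)+1)) ^ β ≤ 1 + β * -(1/((n:ℝ)+1))
      have hmul := mul_le_mul_of_nonneg_right hb
        (Real.rpow_nonneg hn1.le β)
      have hL : ((n : ℝ) / ((n : ℝ) + 1)) ^ β * ((n : ℝ) + 1) ^ β = (n : ℝ) ^ β := by
        rw [← Real.mul_rpow (by positivity) hn1.le]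
        congr 1
        field_simp
      have hR : (1 + β * -(1 / ((n : ℝ) + 1))) * ((n : ℝ) + 1) ^ β
          = ((n : ℝ) + 1) ^ β - β * ((n : ℝ) + 1) ^ (β - 1) := by
        have h2 : ((n : ℝ) + 1) ^ (β - 1) = ((n : ℝ) + 1) ^ β / ((n : ℝ) + 1) := by
          rw [Real.rpow_sub hn1, Real.rpow_one]
        rw [h2]
        field_simp
        ring
      rw [hL, hR] at hmul
      -- hmul : n^β ≤ (n+1)^β - β (n+1)^(β-1)
      have hβd : β * (d : ℝ) = 1 := by
        rw [hβ]; field_simp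
      have h3 : β * ((n : ℝ) + 1) ^ (β - 1) ≤ ((n : ℝ) + 1) ^ β - (n : ℝ) ^ β := by linarith
      have h4 := mul_le_mul_of_nonneg_left h3 hd0.le
      calc ((n : ℝ) + 1) ^ (β - 1) = (d : ℝ) * (β * ((n : ℝ) + 1) ^ (β - 1)) := by
            rw [← mul_assoc, mul_comm (d : ℝ) β, hβd, one_mul]
        _ ≤ (d : ℝ) * (((n : ℝ) + 1) ^ β - (n : ℝ) ^ β) := h4
    have hpush : ((n : ℝ) + 1) = ((n + 1 : ℕ) : ℝ) := by push_cast; ring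
    calc ∑ k ∈ Finset.range n, ((k : ℝ) + 1) ^ ((1 : ℝ) / d - 1) + ((n : ℝ) + 1) ^ ((1:ℝ)/d - 1)
        ≤ d * (n : ℝ) ^ β + d * (((n : ℝ) + 1) ^ β - (n : ℝ) ^ β) := by
          exact add_le_add ih key
      _ = d * ((n : ℝ) + 1) ^ β := by ring
      _ = d * ((n + 1 : ℕ) : ℝ) ^ ((1 : ℝ) / d) := by rw [← hpush, hβ]

/-- Hall-type lemma: there is an injection `f` on `S` with `f z` less than the "rank" of `z`
with respect to a key function. -/
lemma exists_rank_inj {E : Type*} [DecidableEq E] (S : Finset E) (key : E → ℝ)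
    [DecidablePred fun p : E × E => key p.1 ≤ key p.2] :
    ∃ f : {x // x ∈ S} → ℕ, Function.Injective f ∧
      ∀ z : {x // x ∈ S}, f z < (S.filter (fun x' => key x' ≤ key (z : E))).card := by
  classical
  set rank : {x // x ∈ S} → ℕ := fun z => (S.filter (fun x' => key x' ≤ key (z : E))).card
  have hcond : ∀ s : Finset {x // x ∈ S}, s.card ≤ (s.biUnion (fun z => Finset.range (rank z))).card := by
    intro s
    rcases s.eq_empty_or_nonempty with rfl | hne
    · simp
    · obtain ⟨z0, hz0, hmax⟩ := s.exists_max_image (fun z => key (z : E)) hne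
      have h1 : s.card ≤ rank z0 := by
        exact Finset.card_le_card_of_injOn (fun z => (z : E))
          (fun z hz => Finset.mem_filter.2 ⟨z.2, hmax z hz⟩)
          (fun a _ b _ hab => Subtype.ext hab)
      have h2 : rank z0 ≤ (s.biUnion (fun z => Finset.range (rank z))).card := by
        have : Finset.range (rank z0) ⊆ s.biUnion (fun z => Finset.range (rank z)) :=
          Finset.subset_biUnion_of_mem (fun z => Finset.range (rank z)) hz0
        simpa using Finset.card_le_card this
      omega
  obtain ⟨f, hfinj, hf⟩ := (Finset.all_card_le_biUnion_card_iff_exists_injective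
    (fun z : {x // x ∈ S} => Finset.range (rank z))).1 hcond
  exact ⟨f, hfinj, fun z => Finset.mem_range.1 (hf z)⟩

/-- There is a constant c depending only on d ≥ 2 such that for any bounded A, any 0 < ρ < 1,
any maximal ρ-separated subset A^ρ of A and any y ∈ A^ρ,
Σ_{x ∈ A^ρ, dist(y,x) > 1} dist(y,x)^{1-d} ≤ c ρ^{-d} |A^ρ|^{1/d}. -/
theorem stmt8 (d : ℕ) (hd : 2 ≤ d) :
    ∃ c : ℝ, 0 < c ∧
      ∀ (A : Set (EuclideanSpace ℝ (Fin d))), Bornology.IsBounded A →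
      ∀ ρ : ℝ, 0 < ρ → ρ < 1 →
      ∀ S : Finset (EuclideanSpace ℝ (Fin d)), ↑S ⊆ A →
        IsSep ρ (S : Set (EuclideanSpace ℝ (Fin d))) → S.card = packNum ρ A →
      ∀ y ∈ S,
        (∑ x ∈ S.filter (fun x => 1 < dist y x), dist y x ^ (1 - (d : ℝ)))
          ≤ c * ρ⁻¹ ^ d * (S.card : ℝ) ^ (1 / (d : ℝ)) := by
  classical
  have hd1 : 1 ≤ d := by omega
  have hd0 : (0 : ℝ) < d := by exact_mod_cast hd1
  refine ⟨4 ^ d * d, by positivity, ?_⟩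
  intro A _hA ρ hρ0 hρ1 S _hSA hsep _hcard y hy
  set n := S.card with hn
  -- rank and injection
  obtain ⟨f, hfinj, hfrank⟩ := exists_rank_inj S (fun x => dist y x)
  set rank : {x // x ∈ S} → ℕ :=
    fun z => (S.filter (fun x' => dist y x' ≤ dist y (z : _))).card with hrankdef
  -- pointwise bound
  have hpoint : ∀ z : {x // x ∈ S}, 1 < dist y z.1 →
      dist y z.1 ^ (1 - (d : ℝ))
        ≤ (4 / ρ) ^ ((d : ℝ) - 1) * ((f z : ℝ) + 1) ^ ((1 : ℝ) / d - 1) := by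
    intro z hz1
    set r := dist y z.1 with hr
    have hr0 : (0 : ℝ) < r := lt_trans one_pos hz1
    have hρr : ρ ≤ r := le_of_lt (lt_trans hρ1 hz1)
    have hcount := count_le_aux hd1 hρ0 hsep y hρr
    -- (rank z : ℝ) * (ρ/2)^d ≤ (2r)^d
    have hrank_le : ((rank z : ℝ)) ≤ (4 * r / ρ) ^ d := by
      have hρ2 : (0 : ℝ) < (ρ / 2) ^ d := by positivity
      rw [← le_div_iff₀ hρ2] at hcount
      calc ((rank z : ℝ)) ≤ (2 * r) ^ d / (ρ / 2) ^ d := hcount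
        _ = (4 * r / ρ) ^ d := by
            rw [← div_pow]
            congr 1
            field_simp
            ring
    have hm1 : (1 : ℝ) ≤ (f z : ℝ) + 1 := by
      have : (0 : ℝ) ≤ (f z : ℝ) := Nat.cast_nonneg _
      linarith
    have hmrank : ((f z : ℝ) + 1) ≤ (rank z : ℝ) := by
      have := hfrank z
      exact_mod_cast Nat.succ_le_of_lt this
    have hmle : ((f z : ℝ) + 1) ≤ (4 * r / ρ) ^ d := le_trans hmrank hrank_le
    -- take d-th root: (f z + 1)^(1/d) ≤ 4r/ρ
    have h4r : (0 : ℝ) < 4 * r / ρ := by positivity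
    have hroot : ((f z : ℝ) + 1) ^ ((1 : ℝ) / d) ≤ 4 * r / ρ := by
      have h1 : ((f z : ℝ) + 1) ^ ((1 : ℝ) / d) ≤ ((4 * r / ρ) ^ d) ^ ((1 : ℝ) / d) :=
        Real.rpow_le_rpow (by linarith) hmle (by positivity)
      have h2 : ((4 * r / ρ) ^ d) ^ ((1 : ℝ) / d) = 4 * r / ρ := by
        rw [← Real.rpow_natCast (4 * r / ρ) d, ← Real.rpow_mul h4r.le]
        rw [mul_one_div, div_self hd0.ne', Real.rpow_one]
      rwa [h2] at h1
    -- so (ρ/4) * (f z + 1)^(1/d) ≤ r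
    have hkey : (ρ / 4) * ((f z : ℝ) + 1) ^ ((1 : ℝ) / d) ≤ r := by
      rw [le_div_iff₀ hρ0] at hroot
      nlinarith [hroot, Real.rpow_nonneg (show (0:ℝ) ≤ (f z : ℝ) + 1 by linarith) ((1:ℝ)/d)]
    have hLpos : (0 : ℝ) < (ρ / 4) * ((f z : ℝ) + 1) ^ ((1 : ℝ) / d) := by
      have : (0 : ℝ) < ((f z : ℝ) + 1) ^ ((1 : ℝ) / d) :=
        Real.rpow_pos_of_pos (by linarith) _
      positivity
    -- apply antitone rpow with nonpositive exponent 1 - d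
    have hexp : (1 : ℝ) - d ≤ 0 := by
      have : (1 : ℝ) ≤ d := by exact_mod_cast hd1
      linarith
    have hmain : r ^ (1 - (d : ℝ))
        ≤ ((ρ / 4) * ((f z : ℝ) + 1) ^ ((1 : ℝ) / d)) ^ (1 - (d : ℝ)) :=
      Real.rpow_le_rpow_of_nonpos hLpos hkey hexp
    have hcalc : ((ρ / 4) * ((f z : ℝ) + 1) ^ ((1 : ℝ) / d)) ^ (1 - (d : ℝ))
        = (4 / ρ) ^ ((d : ℝ) - 1) * ((f z : ℝ) + 1) ^ ((1 : ℝ) / d - 1) := by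
      have hfz1 : (0 : ℝ) < (f z : ℝ) + 1 := by linarith
      rw [Real.mul_rpow (by positivity) (Real.rpow_nonneg hfz1.le _)]
      congr 1
      · -- (ρ/4) ^ (1 - d) = (4/ρ) ^ (d - 1)
        have h14 : (1 : ℝ) - d = -((d : ℝ) - 1) := by ring
        rw [h14, Real.rpow_neg (by positivity), ← Real.inv_rpow (by positivity)]
        congr 1
        rw [inv_div]
      · -- ((f+1)^(1/d))^(1-d) = (f+1)^(1/d - 1)
        rw [← Real.rpow_mul hfz1.le]
        congr 1
        field_simp
    rw [hcalc] at hmain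
    exact hmain
  -- convert the sum over the filter to a sum over the attached set
  set T' := S.attach.filter (fun z : {x // x ∈ S} => 1 < dist y z.1) with hT'
  have hsum_eq : (∑ x ∈ S.filter (fun x => 1 < dist y x), dist y x ^ (1 - (d : ℝ)))
      = ∑ z ∈ T', dist y z.1 ^ (1 - (d : ℝ)) := by
    rw [Finset.sum_filter, Finset.sum_filter]
    exact (Finset.sum_attach S fun x => if 1 < dist y x then dist y x ^ (1 - (d:ℝ)) else 0).symm
  rw [hsum_eq]
  have hstep1 : ∑ z ∈ T', dist y z.1 ^ (1 - (d : ℝ))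
      ≤ ∑ z ∈ T', (4 / ρ) ^ ((d : ℝ) - 1) * ((f z : ℝ) + 1) ^ ((1 : ℝ) / d - 1) := by
    apply Finset.sum_le_sum
    intro z hz
    exact hpoint z (Finset.mem_filter.1 hz).2
  have hstep2 : ∑ z ∈ T', ((f z : ℝ) + 1) ^ ((1 : ℝ) / d - 1)
      ≤ ∑ k ∈ Finset.range n, ((k : ℝ) + 1) ^ ((1 : ℝ) / d - 1) := by
    have himg : ∑ z ∈ T', ((f z : ℝ) + 1) ^ ((1 : ℝ) / d - 1)
        = ∑ k ∈ T'.image f, ((k : ℝ) + 1) ^ ((1 : ℝ) / d - 1) := by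
      rw [Finset.sum_image]
      intro a _ b _ hab
      exact hfinj hab
    rw [himg]
    apply Finset.sum_le_sum_of_subset_of_nonneg
    · intro k hk
      obtain ⟨z, _, rfl⟩ := Finset.mem_image.1 hk
      have h1 : f z < rank z := hfrank z
      have h2 : rank z ≤ n := Finset.card_filter_le _ _
      exact Finset.mem_range.2 (lt_of_lt_of_le h1 h2)
    · intro k _ _
      positivity
  have hstep3 := sum_rpow_aux hd1 n
  have hCpos : (0 : ℝ) ≤ (4 / ρ) ^ ((d : ℝ) - 1) := Real.rpow_nonneg (by positivity) _
  have hchain : ∑ z ∈ T', dist y z.1 ^ (1 - (d : ℝ))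
      ≤ (4 / ρ) ^ ((d : ℝ) - 1) * ((d : ℝ) * (n : ℝ) ^ ((1 : ℝ) / d)) := by
    calc ∑ z ∈ T', dist y z.1 ^ (1 - (d : ℝ))
        ≤ ∑ z ∈ T', (4 / ρ) ^ ((d : ℝ) - 1) * ((f z : ℝ) + 1) ^ ((1 : ℝ) / d - 1) := hstep1
      _ = (4 / ρ) ^ ((d : ℝ) - 1) * ∑ z ∈ T', ((f z : ℝ) + 1) ^ ((1 : ℝ) / d - 1) := by
          rw [Finset.mul_sum]
      _ ≤ (4 / ρ) ^ ((d : ℝ) - 1) * ∑ k ∈ Finset.range n, ((k : ℝ) + 1) ^ ((1 : ℝ) / d - 1) :=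
          mul_le_mul_of_nonneg_left hstep2 hCpos
      _ ≤ (4 / ρ) ^ ((d : ℝ) - 1) * ((d : ℝ) * (n : ℝ) ^ ((1 : ℝ) / d)) :=
          mul_le_mul_of_nonneg_left hstep3 hCpos
  -- final constant comparison
  have hconst : (4 / ρ) ^ ((d : ℝ) - 1) ≤ 4 ^ d * ρ⁻¹ ^ d := by
    have h4ρ : (1 : ℝ) ≤ 4 / ρ := by
      rw [le_div_iff₀ hρ0]; linarith
    have h1 : (4 / ρ) ^ ((d : ℝ) - 1) ≤ (4 / ρ) ^ (d : ℝ) :=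
      Real.rpow_le_rpow_of_exponent_le h4ρ (by linarith)
    have h2 : (4 / ρ) ^ (d : ℝ) = 4 ^ d * ρ⁻¹ ^ d := by
      rw [Real.rpow_natCast, div_pow, div_eq_mul_inv, ← inv_pow]
    linarith [h1, h2.le, h2.ge]
  have hnpow : (0 : ℝ) ≤ (d : ℝ) * (n : ℝ) ^ ((1 : ℝ) / d) := by
    have : (0 : ℝ) ≤ (n : ℝ) ^ ((1 : ℝ) / d) := Real.rpow_nonneg (Nat.cast_nonneg _) _
    positivity
  calc ∑ z ∈ T', dist y z.1 ^ (1 - (d : ℝ))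
      ≤ (4 / ρ) ^ ((d : ℝ) - 1) * ((d : ℝ) * (n : ℝ) ^ ((1 : ℝ) / d)) := hchain
    _ ≤ (4 ^ d * ρ⁻¹ ^ d) * ((d : ℝ) * (n : ℝ) ^ ((1 : ℝ) / d)) :=
        mul_le_mul_of_nonneg_right hconst hnpow
    _ = 4 ^ d * (d : ℝ) * ρ⁻¹ ^ d * (n : ℝ) ^ (1 / (d : ℝ)) := by ring
end

section
/- Let d ≥ 1 and let A = [0,1]^d ⊆ ℝ^d. Then the limit lim_{ρ→0+} ρ^d N_ρ(A) exists and satisfies 0 < lim_{ρ→0+} ρ^d N_ρ(A) < ∞ (in fact the limit is at least 1). -/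
open Filter Set

namespace Stmt9Aux

def cube (d : ℕ) : Set (EuclideanSpace ℝ (Fin d)) := {x | ∀ i, x i ∈ Set.Icc (0:ℝ) 1}

variable {d : ℕ}

lemma coord_le_dist (x y : EuclideanSpace ℝ (Fin d)) (i : Fin d) :
    |x i - y i| ≤ dist x y := by
  rw [EuclideanSpace.dist_eq]
  rw [← Real.sqrt_sq_eq_abs]
  apply Real.sqrt_le_sqrt
  have h := Finset.single_le_sum (f := fun j => dist (x j) (y j) ^ 2)
    (fun j _ => sq_nonneg _) (Finset.mem_univ i)
  simpa [Real.dist_eq] using h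

lemma floor_eq_abs_lt {a b : ℝ} (ha : 0 ≤ a) (hb : 0 ≤ b) (h : ⌊a⌋₊ = ⌊b⌋₊) :
    |a - b| < 1 := by
  rw [abs_sub_lt_iff]
  constructor
  · have h1 : a < ⌊a⌋₊ + 1 := Nat.lt_floor_add_one a
    have h2 : (⌊b⌋₊ : ℝ) ≤ b := Nat.floor_le hb
    rw [h] at h1; linarith
  · have h1 : b < ⌊b⌋₊ + 1 := Nat.lt_floor_add_one b
    have h2 : (⌊a⌋₊ : ℝ) ≤ a := Nat.floor_le ha
    rw [h] at h2; linarith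

/-- cardinality bound for separated sets in the cube -/
lemma card_le_of_sep (hd : 1 ≤ d) {ρ : ℝ} (hρ : 0 < ρ) (S : Finset (EuclideanSpace ℝ (Fin d)))
    (hS : ↑S ⊆ cube d) (hsep : IsSep ρ (S : Set (EuclideanSpace ℝ (Fin d)))) :
    S.card ≤ (⌊(d:ℝ)/ρ⌋₊ + 1) ^ d := by
  classical
  set φ : EuclideanSpace ℝ (Fin d) → (Fin d → ℕ) := fun x i => ⌊x i * d / ρ⌋₊ with hφ
  have hmem : ∀ x ∈ S, φ x ∈ Fintype.piFinset (fun _ : Fin d => Finset.range (⌊(d:ℝ)/ρ⌋₊ + 1)) := by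
    intro x hx
    rw [Fintype.mem_piFinset]
    intro i
    rw [Finset.mem_range, Nat.lt_succ_iff]
    apply Nat.floor_le_floor
    have h1 : x i ∈ Set.Icc (0:ℝ) 1 := hS hx i
    have hd0 : (0:ℝ) < d := Nat.cast_pos.mpr (by omega)
    have hnum : x i * d ≤ d := by nlinarith [h1.1, h1.2]
    gcongr
  have hinj : Set.InjOn φ ↑S := by
    intro x hx y hy hxy
    by_contra hne
    have hsep' := hsep x hx y hy hne
    have hco : ∀ i, |x i - y i| < ρ / d := by
      intro i
      have hxi := (hS hx i).1
      have hyi := (hS hy i).1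
      have heq : ⌊x i * d / ρ⌋₊ = ⌊y i * d / ρ⌋₊ := congrFun hxy i
      have hd0 : (0:ℝ) < d := Nat.cast_pos.mpr (by omega)
      have := floor_eq_abs_lt (by positivity) (by positivity) heq
      have h2 : |x i * d / ρ - y i * d / ρ| = |x i - y i| * (d / ρ) := by
        rw [← abs_of_pos (show (0:ℝ) < d/ρ by positivity), ← abs_mul]
        ring_nf
      rw [h2] at this
      rw [show ρ / (d:ℝ) = 1 / (d / ρ) by field_simp]
      rw [lt_div_iff₀ (by positivity)]
      linarith
    have hdist : dist x y < ρ := by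
      rw [EuclideanSpace.dist_eq]
      have hsum : ∑ i, dist (x i) (y i) ^ 2 < (d:ℝ) * (ρ/d)^2 := by
        have : ∑ i : Fin d, dist (x i) (y i) ^ 2 < ∑ _i : Fin d, (ρ/(d:ℝ))^2 := by
          apply Finset.sum_lt_sum_of_nonempty
          · exact Finset.univ_nonempty_iff.mpr (by have : NeZero d := ⟨by omega⟩; infer_instance)
          · intro i _
            have := hco i
            rw [Real.dist_eq]
            have habs : (0:ℝ) ≤ |x i - y i| := abs_nonneg _
            nlinarith
        simpa [Finset.sum_const, Finset.card_univ] using this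
      have hd0 : (0:ℝ) < d := Nat.cast_pos.mpr (by omega)
      have hle : (d:ℝ) * (ρ/d)^2 ≤ ρ^2 := by
        rw [div_pow]
        have hd1 : (1:ℝ) ≤ d := by exact_mod_cast hd
        rw [mul_div_assoc']
        rw [div_le_iff₀ (by positivity)]
        nlinarith [sq_nonneg ρ, mul_le_mul_of_nonneg_right (by nlinarith : (d:ℝ) ≤ d^2) (sq_nonneg ρ)]
      calc Real.sqrt (∑ i, dist (x i) (y i) ^ 2) < Real.sqrt ((d:ℝ) * (ρ/d)^2) := by
            apply Real.sqrt_lt_sqrt (by positivity) hsum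
        _ ≤ Real.sqrt (ρ^2) := Real.sqrt_le_sqrt hle
        _ = ρ := Real.sqrt_sq hρ.le
    linarith
  calc S.card ≤ (Fintype.piFinset (fun _ : Fin d => Finset.range (⌊(d:ℝ)/ρ⌋₊ + 1))).card :=
        Finset.card_le_card_of_injOn φ hmem hinj
    _ = (⌊(d:ℝ)/ρ⌋₊ + 1) ^ d := by
        rw [Fintype.card_piFinset]
        simp

lemma zero_mem_sepSets (ρ : ℝ) :
    0 ∈ {n : ℕ | ∃ S : Finset (EuclideanSpace ℝ (Fin d)), ↑S ⊆ cube d ∧ IsSep ρ (S : Set (EuclideanSpace ℝ (Fin d))) ∧ S.card = n} :=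
  ⟨∅, by simp, by intro x hx; simp at hx, rfl⟩

lemma bddAbove_sepSets (hd : 1 ≤ d) {ρ : ℝ} (hρ : 0 < ρ) :
    BddAbove {n : ℕ | ∃ S : Finset (EuclideanSpace ℝ (Fin d)), ↑S ⊆ cube d ∧ IsSep ρ (S : Set (EuclideanSpace ℝ (Fin d))) ∧ S.card = n} := by
  refine ⟨(⌊(d:ℝ)/ρ⌋₊ + 1) ^ d, ?_⟩
  rintro n ⟨S, h1, h2, rfl⟩
  exact card_le_of_sep hd hρ S h1 h2

lemma card_le_packNum (hd : 1 ≤ d) {ρ : ℝ} (hρ : 0 < ρ) (S : Finset (EuclideanSpace ℝ (Fin d)))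
    (hS : ↑S ⊆ cube d) (hsep : IsSep ρ (S : Set (EuclideanSpace ℝ (Fin d)))) : S.card ≤ packNum ρ (cube d) :=
  le_csSup (bddAbove_sepSets hd hρ) ⟨S, hS, hsep, rfl⟩

lemma exists_pack (hd : 1 ≤ d) {ρ : ℝ} (hρ : 0 < ρ) :
    ∃ S : Finset (EuclideanSpace ℝ (Fin d)), ↑S ⊆ cube d ∧ IsSep ρ (S : Set (EuclideanSpace ℝ (Fin d))) ∧
      S.card = packNum ρ (cube d) :=
  Nat.sSup_mem ⟨0, zero_mem_sepSets ρ⟩ (bddAbove_sepSets hd hρ)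

lemma packNum_mono (hd : 1 ≤ d) {ρ ρ' : ℝ} (hρ : 0 < ρ) (h : ρ ≤ ρ') :
    packNum ρ' (cube d) ≤ packNum ρ (cube d) := by
  obtain ⟨S, h1, h2, h3⟩ := exists_pack (d := d)  hd (hρ.trans_le h)
  rw [← h3]
  exact card_le_packNum hd hρ S h1 (fun x hx y hy hxy => h.trans (h2 x hx y hy hxy))

lemma packNum_upper (hd : 1 ≤ d) {ρ : ℝ} (hρ : 0 < ρ) :
    (packNum ρ (cube d) : ℝ) ≤ ((d:ℝ)/ρ + 1) ^ d := by
  obtain ⟨S, h1, h2, h3⟩ := exists_pack (d := d)  hd hρ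
  rw [← h3]
  have := card_le_of_sep hd hρ S h1 h2
  calc (S.card : ℝ) ≤ ((⌊(d:ℝ)/ρ⌋₊ + 1 : ℕ) : ℝ) ^ d := by exact_mod_cast this
    _ ≤ ((d:ℝ)/ρ + 1) ^ d := by
        apply pow_le_pow_left₀ (by positivity)
        push_cast
        have : (⌊(d:ℝ)/ρ⌋₊ : ℝ) ≤ (d:ℝ)/ρ := Nat.floor_le (by positivity)
        linarith

lemma one_le_abs_cast {a b : ℕ} (h : a ≠ b) : (1:ℝ) ≤ |(a:ℝ) - (b:ℝ)| := by
  have h1 : (1:ℤ) ≤ |(a:ℤ) - (b:ℤ)| :=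
    Int.one_le_abs (sub_ne_zero.mpr (by exact_mod_cast h))
  have : ((|(a:ℤ) - (b:ℤ)| : ℤ) : ℝ) = |(a:ℝ) - (b:ℝ)| := by push_cast; rfl
  rw [← this]; exact_mod_cast h1

lemma packNum_grid (hd : 1 ≤ d) {ρ : ℝ} (hρ : 0 < ρ) :
    (⌊1/ρ⌋₊ + 1) ^ d ≤ packNum ρ (cube d) := by
  classical
  set m := ⌊1/ρ⌋₊ with hm
  set ψ : (Fin d → Fin (m+1)) → EuclideanSpace ℝ (Fin d) :=
    fun j => (WithLp.equiv 2 (Fin d → ℝ)).symm (fun i => (j i : ℝ) * ρ) with hψ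
  have happ : ∀ j i, ψ j i = (j i : ℝ) * ρ := fun j i => rfl
  have hinj : Function.Injective ψ := by
    intro j j' h
    funext i
    have := congrArg (fun x : EuclideanSpace ℝ (Fin d) => x i) h
    simp only [happ] at this
    have : (j i : ℝ) = j' i := by
      field_simp at this
      linarith
    exact Fin.ext (by exact_mod_cast this)
  set S : Finset (EuclideanSpace ℝ (Fin d)) := Finset.image ψ Finset.univ with hSdef
  have hsub : ↑S ⊆ cube d := by
    intro x hx
    simp only [hSdef, Finset.coe_image, Set.mem_image] at hx
    obtain ⟨j, _, rfl⟩ := hx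
    intro i
    rw [happ]
    constructor
    · positivity
    · have h1 : (j i : ℕ) ≤ m := Nat.lt_succ_iff.mp (j i).isLt
      have h2 : ((j i : ℕ) : ℝ) * ρ ≤ (m : ℝ) * ρ := by
        apply mul_le_mul_of_nonneg_right _ hρ.le
        exact_mod_cast h1
      have h3 : (m : ℝ) * ρ ≤ 1 := by
        rw [hm]
        have := Nat.floor_le (le_of_lt (by positivity : (0:ℝ) < 1/ρ))
        calc (⌊1/ρ⌋₊ : ℝ) * ρ ≤ (1/ρ) * ρ := mul_le_mul_of_nonneg_right this hρ.le
          _ = 1 := by field_simp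
      exact h2.trans h3
  have hsep : IsSep ρ (S : Set (EuclideanSpace ℝ (Fin d))) := by
    intro u hu v hv huv
    simp only [hSdef, Finset.coe_image, Set.mem_image] at hu hv
    obtain ⟨j, _, rfl⟩ := hu
    obtain ⟨j', _, rfl⟩ := hv
    have hjj : j ≠ j' := fun h => huv (by rw [h])
    obtain ⟨i, hi⟩ := Function.ne_iff.mp hjj
    have h1 : ρ ≤ |ψ j i - ψ j' i| := by
      rw [happ, happ, ← sub_mul, abs_mul, abs_of_pos hρ]
      have := one_le_abs_cast (a := (j i : ℕ)) (b := (j' i : ℕ))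
        (fun h => hi (Fin.ext h))
      nlinarith
    exact h1.trans (coord_le_dist _ _ i)
  have hcard : S.card = (m + 1) ^ d := by
    rw [hSdef, Finset.card_image_of_injective _ hinj]
    simp [Fintype.card_fun]
  calc (m + 1) ^ d = S.card := hcard.symm
    _ ≤ packNum ρ (cube d) := card_le_packNum hd hρ S hsub hsep

lemma packNum_superadd (hd : 1 ≤ d) {ρ : ℝ} (hρ : 0 < ρ) (k : ℕ) (hk : 1 ≤ k) :
    k ^ d * packNum ρ (cube d) ≤ packNum (ρ / (k * (1 + ρ))) (cube d) := by
  classical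
  set c : ℝ := (k:ℝ) * (1 + ρ) with hc
  have hk1 : (1:ℝ) ≤ k := by exact_mod_cast hk
  have hc0 : 0 < c := by positivity
  set σ : ℝ := ρ / c with hσ
  have hσ0 : 0 < σ := by positivity
  obtain ⟨S, hSsub, hSsep, hScard⟩ := exists_pack (d := d) hd hρ
  set Ψ : EuclideanSpace ℝ (Fin d) × (Fin d → Fin k) → EuclideanSpace ℝ (Fin d) :=
    fun p => (WithLp.equiv 2 (Fin d → ℝ)).symm (fun i => (p.1 i + (1+ρ) * (p.2 i : ℝ)) / c) with hΨ
  have happ : ∀ p i, Ψ p i = (p.1 i + (1+ρ) * (p.2 i : ℝ)) / c := fun p i => rfl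
  -- key separation claim
  have hkey : ∀ x ∈ S, ∀ y ∈ S, ∀ j j' : Fin d → Fin k, (x, j) ≠ (y, j') →
      σ ≤ dist (Ψ (x, j)) (Ψ (y, j')) := by
    intro x hx y hy j j' hne
    by_cases hjj : j = j'
    · subst hjj
      have hxy : x ≠ y := fun h => hne (by rw [h])
      have hco : ∀ i, dist (Ψ (x, j) i) (Ψ (y, j) i) = dist (x i) (y i) / c := by
        intro i
        rw [Real.dist_eq, Real.dist_eq, happ, happ]
        rw [div_sub_div_same, abs_div, abs_of_pos hc0]
        congr 2
        ring
      have hdist : dist (Ψ (x, j)) (Ψ (y, j)) = dist x y / c := by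
        rw [EuclideanSpace.dist_eq, EuclideanSpace.dist_eq]
        rw [Finset.sum_congr rfl (fun i _ => by rw [hco i, div_pow]), ← Finset.sum_div]
        rw [Real.sqrt_div (by positivity), Real.sqrt_sq hc0.le]
      rw [hdist, hσ]
      have := hSsep x hx y hy hxy
      gcongr
    · obtain ⟨i, hi⟩ := Function.ne_iff.mp hjj
      have h1 : σ ≤ |Ψ (x, j) i - Ψ (y, j') i| := by
        rw [happ, happ, div_sub_div_same, abs_div, abs_of_pos hc0, hσ]
        have hnum : ρ ≤ |x i + (1+ρ) * (j i : ℝ) - (y i + (1+ρ) * (j' i : ℝ))| := by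
          set aa : ℝ := x i - y i with haa
          set bb : ℝ := (j i : ℝ) - (j' i : ℝ) with hbb
          have ha : |aa| ≤ 1 := by
            have h1 := hSsub hx i
            have h2 := hSsub hy i
            rw [haa, abs_le]
            exact ⟨by linarith [h1.1, h2.2], by linarith [h1.2, h2.1]⟩
          have hb : 1 ≤ |bb| :=
            one_le_abs_cast (a := (j i : ℕ)) (b := (j' i : ℕ)) (fun h => hi (Fin.ext h))
          have heq : x i + (1+ρ) * (j i : ℝ) - (y i + (1+ρ) * (j' i : ℝ)) = aa + (1+ρ)*bb := by
            rw [haa, hbb]; ring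
          rw [heq]
          have htri : |(1+ρ)*bb| ≤ |aa + (1+ρ)*bb| + |aa| := by
            calc |(1+ρ)*bb| = |(aa + (1+ρ)*bb) + (-aa)| := by ring_nf
              _ ≤ |aa + (1+ρ)*bb| + |(-aa)| := abs_add_le _ _
              _ = |aa + (1+ρ)*bb| + |aa| := by rw [abs_neg]
          have hmul : (1+ρ) ≤ |(1+ρ)*bb| := by
            rw [abs_mul, abs_of_pos (by linarith : (0:ℝ) < 1+ρ)]
            nlinarith
          linarith
        gcongr
      exact h1.trans (coord_le_dist _ _ i)
  -- the image finset
  set T : Finset (EuclideanSpace ℝ (Fin d)) :=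
    (S ×ˢ (Finset.univ : Finset (Fin d → Fin k))).image Ψ with hT
  have hmemT : ∀ u ∈ T, ∃ x ∈ S, ∃ j : Fin d → Fin k, Ψ (x, j) = u := by
    intro u hu
    simp only [hT, Finset.mem_image, Finset.mem_product] at hu
    obtain ⟨⟨x, j⟩, ⟨hx, _⟩, rfl⟩ := hu
    exact ⟨x, hx, j, rfl⟩
  have hTsub : ↑T ⊆ cube d := by
    intro u hu
    obtain ⟨x, hx, j, rfl⟩ := hmemT u hu
    intro i
    rw [happ]
    have h1 := hSsub hx i
    have hj0 : (0:ℝ) ≤ (j i : ℝ) := by positivity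
    have hjk : (j i : ℝ) ≤ (k:ℝ) - 1 := by
      have : (j i : ℕ) ≤ k - 1 := Nat.le_sub_one_of_lt (j i).isLt
      have h2 : ((j i : ℕ) : ℝ) ≤ ((k - 1 : ℕ) : ℝ) := by exact_mod_cast this
      rwa [Nat.cast_sub hk, Nat.cast_one] at h2
    constructor
    · have : 0 ≤ x i + (1+ρ) * (j i : ℝ) := by nlinarith [h1.1]
      positivity
    · rw [div_le_one hc0, hc]
      nlinarith [h1.2]
  have hTsep : IsSep σ (T : Set (EuclideanSpace ℝ (Fin d))) := by
    intro u hu v hv huv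
    obtain ⟨x, hx, j, rfl⟩ := hmemT u hu
    obtain ⟨y, hy, j', rfl⟩ := hmemT v hv
    exact hkey x hx y hy j j' (fun h => huv (by rw [h]))
  have hTcard : T.card = packNum ρ (cube d) * k ^ d := by
    rw [hT, Finset.card_image_of_injOn, Finset.card_product, hScard]
    · simp [Fintype.card_fun]
    · rintro ⟨x, j⟩ hp ⟨y, j'⟩ hq hpq
      simp only [Finset.coe_product, Set.mem_prod, Finset.mem_coe] at hp hq
      by_contra hne
      have := hkey x hp.1 y hq.1 j j' hne
      rw [hpq, dist_self] at this
      linarith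
  have := card_le_packNum hd hσ0 T hTsub hTsep
  rw [hTcard] at this
  rw [mul_comm] at this
  exact_mod_cast this

noncomputable def f (d : ℕ) (ρ : ℝ) : ℝ := ρ ^ d * (packNum ρ (cube d) : ℝ)

lemma f_mem (hd : 1 ≤ d) {ρ : ℝ} (hρ : ρ ∈ Set.Ioo (0:ℝ) 1) :
    f d ρ ∈ Set.Icc (1:ℝ) ((d+1:ℝ)^d) := by
  obtain ⟨hρ0, hρ1⟩ := hρ
  unfold f
  constructor
  · have h1 : ((⌊1/ρ⌋₊:ℝ) + 1) ^ d ≤ (packNum ρ (cube d) : ℝ) := by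
      have := packNum_grid (d := d) hd hρ0
      exact_mod_cast this
    have hfl : 1/ρ < (⌊1/ρ⌋₊:ℝ) + 1 := Nat.lt_floor_add_one _
    have h2 : (1:ℝ) ≤ ρ * ((⌊1/ρ⌋₊:ℝ) + 1) := by
      have hinv : ρ * (1/ρ) = 1 := by field_simp
      nlinarith [mul_lt_mul_of_pos_left hfl hρ0]
    calc (1:ℝ) = 1 ^ d := (one_pow d).symm
      _ ≤ (ρ * ((⌊1/ρ⌋₊:ℝ) + 1)) ^ d := pow_le_pow_left₀ (by norm_num) h2 d
      _ = ρ ^ d * ((⌊1/ρ⌋₊:ℝ) + 1) ^ d := mul_pow _ _ _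
      _ ≤ ρ ^ d * (packNum ρ (cube d) : ℝ) :=
          mul_le_mul_of_nonneg_left h1 (pow_nonneg hρ0.le d)
  · calc ρ ^ d * (packNum ρ (cube d) : ℝ) ≤ ρ ^ d * ((d:ℝ)/ρ + 1) ^ d :=
          mul_le_mul_of_nonneg_left (packNum_upper hd hρ0) (pow_nonneg hρ0.le d)
    _ = (ρ * ((d:ℝ)/ρ + 1)) ^ d := (mul_pow _ _ _).symm
    _ = ((d:ℝ) + ρ) ^ d := by
        congr 1
        field_simp
    _ ≤ ((d:ℝ) + 1) ^ d := pow_le_pow_left₀ (by positivity) (by linarith) d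

end Stmt9Aux

set_option maxHeartbeats 1000000 in
/-- For A = [0,1]^d, the limit of ρ^d N_ρ(A) as ρ → 0+ exists, and it lies in (0,∞);
in fact it is at least 1. -/
theorem stmt9 (d : ℕ) (hd : 1 ≤ d) :
    ∃ l : ℝ, 1 ≤ l ∧
      Filter.Tendsto
        (fun ρ : ℝ =>
          ρ ^ d * (packNum ρ {x : EuclideanSpace ℝ (Fin d) | ∀ i, x i ∈ Set.Icc (0:ℝ) 1} : ℝ))
        (nhdsWithin 0 (Set.Ioi 0)) (nhds l) := by
  classical
  have hfun : (fun ρ : ℝ =>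
      ρ ^ d * (packNum ρ {x : EuclideanSpace ℝ (Fin d) | ∀ i, x i ∈ Set.Icc (0:ℝ) 1} : ℝ))
      = Stmt9Aux.f d := rfl
  rw [hfun]
  set F := Stmt9Aux.f d with hF
  set l₀ : Filter ℝ := nhdsWithin 0 (Set.Ioi 0) with hl₀
  have hev : ∀ᶠ ρ in l₀, F ρ ∈ Set.Icc (1:ℝ) ((d+1:ℝ)^d) := by
    filter_upwards [Ioo_mem_nhdsGT_of_mem (show (0:ℝ) ∈ Set.Ico (0:ℝ) 1 by norm_num)] with ρ hρ
    exact Stmt9Aux.f_mem hd hρ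
  have hbddA : Filter.IsBoundedUnder (· ≤ ·) l₀ F :=
    ⟨(d+1:ℝ)^d, by filter_upwards [hev] with ρ h using h.2⟩
  have hbddB : Filter.IsBoundedUnder (· ≥ ·) l₀ F :=
    ⟨1, by filter_upwards [hev] with ρ h using h.1⟩
  set L := Filter.limsup F l₀ with hL
  have hL1 : 1 ≤ L := by
    apply Filter.le_limsup_of_frequently_le ?_ hbddA
    exact ((hev.mono (fun ρ h => h.1)).frequently)
  -- the main eventual lower bound
  have hmain : ∀ ε : ℝ, 0 < ε → ∀ᶠ ρ in l₀, L - ε ≤ F ρ := by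
    intro ε hε
    set C : ℝ := (d+1:ℝ)^d with hC
    have hC0 : 0 < C := by positivity
    have hfreq : ∃ᶠ σ in l₀, L - ε/2 < F σ :=
      Filter.frequently_lt_of_lt_limsup (hbddB.isCoboundedUnder_le) (by linarith)
    set δ : ℝ := min (1/2) (ε / (4*d*C + 1)) with hδ
    have hδ0 : 0 < δ := lt_min (by norm_num) (by positivity)
    obtain ⟨σ, hσf, hσ0, hσδ⟩ :=
      (hfreq.and_eventually (Ioo_mem_nhdsGT_of_mem
        (show (0:ℝ) ∈ Set.Ico (0:ℝ) δ from ⟨le_rfl, hδ0⟩))).exists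
    have hσhalf : σ ≤ 1/2 := le_of_lt (hσδ.trans_le (min_le_left _ _))
    have hσε : σ ≤ ε / (4*d*C + 1) := le_of_lt (hσδ.trans_le (min_le_right _ _))
    have hσ1 : σ < 1 := by linarith
    filter_upwards [Ioo_mem_nhdsGT_of_mem
      (show (0:ℝ) ∈ Set.Ico (0:ℝ) (σ^2) from ⟨le_rfl, by positivity⟩)] with ρ hρmem
    obtain ⟨hρ0, hρσ2⟩ := hρmem
    -- set up k
    set k : ℕ := ⌊σ / (ρ * (1 + σ))⌋₊ with hk
    have hden : 0 < ρ * (1 + σ) := by positivity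
    have hk1 : 1 ≤ k := by
      apply Nat.le_floor
      rw [Nat.cast_one, le_div_iff₀ hden]
      nlinarith
    have hk1R : (1:ℝ) ≤ k := by exact_mod_cast hk1
    have hkfl : (k:ℝ) ≤ σ / (ρ * (1 + σ)) := Nat.floor_le (by positivity)
    have hkflt : σ / (ρ * (1 + σ)) < (k:ℝ) + 1 := Nat.lt_floor_add_one _
    have hcancel : σ / (ρ * (1 + σ)) * (ρ * (1 + σ)) = σ := div_mul_cancel₀ _ hden.ne'
    -- ρ ≤ σ' := σ/(k(1+σ))
    have hρσ' : ρ ≤ σ / (k * (1 + σ)) := by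
      rw [le_div_iff₀ (by positivity)]
      nlinarith [mul_le_mul_of_nonneg_right hkfl hden.le]
    -- packing chain
    have hsup := Stmt9Aux.packNum_superadd hd hσ0 k hk1
    have hmono := Stmt9Aux.packNum_mono hd hρ0 hρσ'
    have hchain : (k:ℝ)^d * (packNum σ (Stmt9Aux.cube d) : ℝ)
        ≤ (packNum ρ (Stmt9Aux.cube d) : ℝ) := by
      exact_mod_cast hsup.trans hmono
    have hgσ0 : (0:ℝ) ≤ (packNum σ (Stmt9Aux.cube d) : ℝ) := Nat.cast_nonneg _
    -- ρ k ≥ σ (1 - 2σ)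
    have hρk : σ * (1 - 2*σ) ≤ ρ * k := by
      have h1 : σ < ((k:ℝ) + 1) * (ρ * (1 + σ)) := by
        rw [div_lt_iff₀ hden] at hkflt
        exact hkflt
      have hbase : σ * (1 - 2*σ) * (1 + σ) ≤ ρ * k * (1 + σ) := by
        nlinarith [mul_lt_mul_of_pos_right hρσ2 (show (0:ℝ) < 1 + σ by linarith)]
      exact le_of_mul_le_mul_right hbase (by linarith)
    -- F ρ ≥ (1-2σ)^d * F σ
    have hσ2nn : (0:ℝ) ≤ 1 - 2*σ := by linarith
    have hstep : (1 - 2*σ)^d * F σ ≤ F ρ := by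
      have e1 : (1 - 2*σ)^d * F σ = (σ * (1 - 2*σ))^d * (packNum σ (Stmt9Aux.cube d) : ℝ) := by
        show (1 - 2*σ)^d * (σ^d * _) = _
        rw [mul_pow]; ring
      have e2 : (σ * (1 - 2*σ))^d * (packNum σ (Stmt9Aux.cube d) : ℝ)
          ≤ (ρ * k)^d * (packNum σ (Stmt9Aux.cube d) : ℝ) :=
        mul_le_mul_of_nonneg_right (pow_le_pow_left₀ (by positivity) hρk d) hgσ0
      have e3 : (ρ * k)^d * (packNum σ (Stmt9Aux.cube d) : ℝ) ≤ F ρ := by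
        show _ ≤ ρ^d * (packNum ρ (Stmt9Aux.cube d) : ℝ)
        rw [mul_pow, mul_assoc]
        exact mul_le_mul_of_nonneg_left hchain (pow_nonneg hρ0.le d)
      rw [e1]
      exact e2.trans e3
    -- Bernoulli and final arithmetic
    have hbern : 1 - 2*(d:ℝ)*σ ≤ (1 - 2*σ)^d := by
      have := one_add_mul_le_pow (show (-2:ℝ) ≤ -(2*σ) by linarith) d
      calc 1 - 2*(d:ℝ)*σ = 1 + (d:ℝ) * (-(2*σ)) := by ring
        _ ≤ (1 + -(2*σ))^d := this
        _ = (1 - 2*σ)^d := by ring_nf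
    have hFσmem : F σ ∈ Set.Icc (1:ℝ) C := Stmt9Aux.f_mem hd ⟨hσ0, hσ1⟩
    have hFσ0 : 0 ≤ F σ := le_trans (by norm_num) hFσmem.1
    have h4 : (1 - 2*(d:ℝ)*σ) * F σ ≤ (1 - 2*σ)^d * F σ :=
      mul_le_mul_of_nonneg_right hbern hFσ0
    have h5 : 2*(d:ℝ)*σ * F σ ≤ 2*(d:ℝ)*σ * C :=
      mul_le_mul_of_nonneg_left hFσmem.2 (by positivity)
    have h6 : 2*(d:ℝ)*σ * C ≤ ε/2 := by
      have hd0 : (0:ℝ) < d := by exact_mod_cast hd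
      have := mul_le_mul_of_nonneg_left hσε (show (0:ℝ) ≤ 2*d*C by positivity)
      have hcalc : 2*(d:ℝ)*C * (ε / (4*d*C + 1)) ≤ ε/2 := by
        rw [← mul_div_assoc, div_le_div_iff₀ (by positivity) (by norm_num)]
        nlinarith [mul_nonneg (mul_nonneg hd0.le hC0.le) hε.le]
      have hcomm : 2*(d:ℝ)*σ*C = 2*d*C*σ := by ring
      linarith
    have hFσlb : L - ε/2 ≤ F σ := le_of_lt hσf
    have hexp : (1 - 2*(d:ℝ)*σ) * F σ = F σ - 2*(d:ℝ)*σ * F σ := by ring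
    linarith [hstep, h4, h5, h6, hFσlb]
  -- conclude
  have hliminf : L ≤ Filter.liminf F l₀ := by
    by_contra hcon
    push_neg at hcon
    set ε : ℝ := (L - Filter.liminf F l₀)/2 with hε
    have hε0 : 0 < ε := by simp only [hε]; linarith
    have h1 : L - ε ≤ Filter.liminf F l₀ :=
      Filter.le_liminf_of_le (hbddA.isCoboundedUnder_ge) (hmain ε hε0)
    simp only [hε] at h1
    linarith
  exact ⟨L, hL1, tendsto_of_le_liminf_of_limsup_le hliminf le_rfl hbddA hbddB⟩
end

section
/- Let d ≥ 1, let ρ > 0, let A ⊆ ℝ^d be a bounded nonempty set whose packing number N = N_ρ(A) satisfies N^{ρ/200} ≥ 2, and let ε = ρ/50. Then for every real z ≥ −(ε/4)·log N one has |(1 − e^{−z}/N^ε)^{N^ε − N^{2ε/3}} − exp(−e^{−z})| ≤ N^{−ε/12}. -/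
private lemma xexp_le_one (x : ℝ) (hx : 0 ≤ x) : x * Real.exp (-x) ≤ 1 := by
  have h : x ≤ Real.exp x := by linarith [Real.add_one_le_exp x]
  have h2 : x * Real.exp (-x) ≤ Real.exp x * Real.exp (-x) :=
    mul_le_mul_of_nonneg_right h (Real.exp_pos _).le
  rwa [← Real.exp_add, add_neg_cancel, Real.exp_zero] at h2

set_option maxHeartbeats 1000000 in
private lemma core_bound (b u : ℝ) (hb0 : 0 < b) (hb3 : 2 ≤ b ^ 3) (hu0 : 0 < u)
    (hu : u ≤ b ^ 3) :
    |(1 - u / b ^ 12) ^ (b ^ 12 - b ^ 8 : ℝ) - Real.exp (-u)| ≤ b⁻¹ := by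
  have hb1 : 1 ≤ b := by
    by_contra h
    push_neg at h
    have : b ^ 3 < 1 := pow_lt_one₀ hb0.le h (by norm_num)
    linarith
  have hM0 : (0:ℝ) < b ^ 12 := by positivity
  have hb5 : (2:ℝ) ≤ b ^ 5 := le_trans hb3 (pow_le_pow_right₀ hb1 (by norm_num))
  have hb4 : (2:ℝ) ≤ b ^ 4 := le_trans hb3 (pow_le_pow_right₀ hb1 (by norm_num))
  have hb38 : 2 * b ^ 3 ≤ b ^ 8 := by
    have := mul_le_mul_of_nonneg_right hb5 (pow_pos hb0 3).le
    nlinarith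
  have hb812 : b ^ 8 ≤ b ^ 12 := pow_le_pow_right₀ hb1 (by norm_num)
  obtain ⟨t, ht⟩ : ∃ t : ℝ, t = u / b ^ 12 := ⟨_, rfl⟩
  have ht0 : 0 < t := by rw [ht]; positivity
  have htu : u = b ^ 12 * t := by rw [ht]; field_simp
  have ht12 : t ≤ 1 / 2 := by
    rw [ht, div_le_iff₀ hM0]; linarith
  have hbase : 0 < 1 - t := by linarith
  rw [← ht, Real.rpow_def_of_pos hbase]
  have hLup : Real.log (1 - t) ≤ -t := by
    have := Real.log_le_sub_one_of_pos hbase; linarith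
  have hLlo : -(t + 2 * t ^ 2) ≤ Real.log (1 - t) := by
    have h1 : (0:ℝ) < (1 - t)⁻¹ := by positivity
    have h2 := Real.log_le_sub_one_of_pos h1
    rw [Real.log_inv] at h2
    have h3 : (1 - t)⁻¹ - 1 = t / (1 - t) := by field_simp; ring
    rw [h3] at h2
    have h4 : t / (1 - t) ≤ t + 2 * t ^ 2 := by
      rw [div_le_iff₀ hbase]; nlinarith
    linarith
  have hp0 : (0:ℝ) ≤ b ^ 12 - b ^ 8 := by linarith
  have h6 : 2 * b ^ 12 * t ≤ b ^ 8 := by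
    have he : (2:ℝ) * b ^ 12 * t = 2 * u := by rw [htu]; ring
    rw [he]; linarith
  obtain ⟨D, hD⟩ : ∃ D : ℝ, D = Real.log (1 - t) * (b ^ 12 - b ^ 8) + u := ⟨_, rfl⟩
  have hD0 : 0 ≤ D := by
    rw [hD]
    have h5 : -(t + 2 * t ^ 2) * (b ^ 12 - b ^ 8) ≤ Real.log (1 - t) * (b ^ 12 - b ^ 8) :=
      mul_le_mul_of_nonneg_right hLlo hp0
    have h7 : 0 ≤ t * (b ^ 8 - 2 * b ^ 12 * t) := mul_nonneg ht0.le (by linarith)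
    have h8 : 0 ≤ b ^ 8 * t ^ 2 := by positivity
    nlinarith [htu]
  have hDup : D ≤ b ^ 8 * t := by
    rw [hD]
    have h5 : Real.log (1 - t) * (b ^ 12 - b ^ 8) ≤ -t * (b ^ 12 - b ^ 8) :=
      mul_le_mul_of_nonneg_right hLup hp0
    nlinarith [htu]
  have hDu : Real.log (1 - t) * (b ^ 12 - b ^ 8) = D - u := by rw [hD]; ring
  rw [hDu]
  have hmono1 : Real.exp (-u) ≤ Real.exp (D - u) := Real.exp_le_exp.mpr (by linarith)
  rw [abs_of_nonneg (by linarith)]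
  have hstep : Real.exp (D - u) - Real.exp (-u) ≤ D * Real.exp (D - u) := by
    have h1 : 1 - D ≤ Real.exp (-D) := by linarith [Real.add_one_le_exp (-D)]
    have h2 : (1 - D) * Real.exp (D - u) ≤ Real.exp (-D) * Real.exp (D - u) :=
      mul_le_mul_of_nonneg_right h1 (Real.exp_pos _).le
    rw [← Real.exp_add] at h2
    have h3 : -D + (D - u) = -u := by ring
    rw [h3] at h2
    nlinarith [Real.exp_pos (D - u)]
  have ht8 : (0:ℝ) ≤ b ^ 8 * t := by positivity
  have h11 : D * Real.exp (D - u) ≤ (b ^ 8 * t) * Real.exp (b ^ 8 * t - u) :=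
    calc D * Real.exp (D - u) ≤ (b ^ 8 * t) * Real.exp (D - u) :=
          mul_le_mul_of_nonneg_right hDup (Real.exp_pos _).le
      _ ≤ (b ^ 8 * t) * Real.exp (b ^ 8 * t - u) :=
          mul_le_mul_of_nonneg_left (Real.exp_le_exp.mpr (by linarith)) ht8
  have h12 : b ^ 8 * t - u ≤ -(b ^ 12 / 2 * t) := by
    have h2b812 : 2 * b ^ 8 ≤ b ^ 12 := by
      have := mul_le_mul_of_nonneg_right hb4 (pow_pos hb0 8).le
      nlinarith
    have h7 : 0 ≤ t * (b ^ 12 - 2 * b ^ 8) := mul_nonneg ht0.le (by linarith)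
    nlinarith [htu]
  have h13 : (b ^ 8 * t) * Real.exp (b ^ 8 * t - u)
      ≤ (b ^ 8 * t) * Real.exp (-(b ^ 12 / 2 * t)) :=
    mul_le_mul_of_nonneg_left (Real.exp_le_exp.mpr h12) ht8
  have h15 := xexp_le_one (b ^ 12 / 2 * t) (by positivity)
  have h14 : (b ^ 8 * t) * Real.exp (-(b ^ 12 / 2 * t)) ≤ 2 / b ^ 4 := by
    have heq : (b ^ 8 * t) * Real.exp (-(b ^ 12 / 2 * t))
        = 2 / b ^ 4 * ((b ^ 12 / 2 * t) * Real.exp (-(b ^ 12 / 2 * t))) := by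
      field_simp
    rw [heq]
    have h2b4 : (0:ℝ) ≤ 2 / b ^ 4 := by positivity
    calc 2 / b ^ 4 * ((b ^ 12 / 2 * t) * Real.exp (-(b ^ 12 / 2 * t)))
        ≤ 2 / b ^ 4 * 1 := mul_le_mul_of_nonneg_left h15 h2b4
      _ = 2 / b ^ 4 := mul_one _
  have h17 : 2 / b ^ 4 ≤ b⁻¹ := by
    rw [div_le_iff₀ (by positivity : (0:ℝ) < b ^ 4), inv_mul_eq_div, le_div_iff₀ hb0]
    nlinarith [mul_nonneg hb0.le (show (0:ℝ) ≤ b ^ 3 - 2 by linarith)]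
  linarith

/-- Proposition 5.4 of the paper, inequality (negative sign): with N = N_ρ(A) and ε = ρ/50,
for every z ≥ -(ε/4) log N,
|(1 − e^{−z}/N^ε)^{N^ε − N^{2ε/3}} − exp(−e^{−z})| ≤ N^{−ε/12}. -/
theorem stmt13 (d : ℕ) (hd : 1 ≤ d) (ρ : ℝ) (hρ : 0 < ρ)
    (A : Set (EuclideanSpace ℝ (Fin d))) (hA : Bornology.IsBounded A) (hne : A.Nonempty)
    (N : ℕ) (hN : N = packNum ρ A) (hN2 : (2 : ℝ) ≤ (N : ℝ) ^ (ρ / 200))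
    (ε : ℝ) (hε : ε = ρ / 50) :
    ∀ z : ℝ, -(ε / 4) * Real.log N ≤ z →
      |(1 - Real.exp (-z) / (N : ℝ) ^ ε) ^ ((N : ℝ) ^ ε - (N : ℝ) ^ (2 * ε / 3))
          - Real.exp (-Real.exp (-z))|
        ≤ (N : ℝ) ^ (-ε / 12) := by
  intro z hz
  have hρ200 : ρ / 200 ≠ 0 := by positivity
  have hN0 : (0:ℝ) < (N:ℝ) := by
    rcases Nat.eq_zero_or_pos N with h | h
    · rw [h] at hN2; simp [Real.zero_rpow hρ200] at hN2; linarith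
    · exact_mod_cast h
  set s : ℝ := ε / 12 * Real.log N with hs
  set b : ℝ := Real.exp s with hbdef
  have hb0 : 0 < b := Real.exp_pos s
  have hpow : ∀ (c : ℝ) (k : ℕ), Real.log N * c = (k : ℝ) * s → (N:ℝ) ^ c = b ^ k := by
    intro c k hc
    rw [Real.rpow_def_of_pos hN0, hc, hbdef, Real.exp_nat_mul]
  have h12eq : (N:ℝ) ^ ε = b ^ 12 := hpow ε 12 (by rw [hs]; push_cast; ring)
  have h8eq : (N:ℝ) ^ (2 * ε / 3) = b ^ 8 := hpow (2 * ε / 3) 8 (by rw [hs]; push_cast; ring)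
  have hinv : (N:ℝ) ^ (-ε / 12) = b⁻¹ := by
    rw [Real.rpow_def_of_pos hN0, show Real.log N * (-ε / 12) = -s by rw [hs]; ring,
      Real.exp_neg, hbdef]
  have hb3 : 2 ≤ b ^ 3 := by
    have h3 : (N:ℝ) ^ (ρ / 200) = b ^ 3 :=
      hpow (ρ / 200) 3 (by rw [hs, hε]; push_cast; ring)
    rw [h3] at hN2; exact hN2
  have hu : Real.exp (-z) ≤ b ^ 3 := by
    have h3s : (3:ℝ) * s = ε / 4 * Real.log N := by rw [hs]; ring
    have hb3eq : b ^ 3 = Real.exp (3 * s) := by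
      rw [hbdef, ← Real.exp_nat_mul]; norm_num
    rw [hb3eq]
    apply Real.exp_le_exp.mpr
    rw [h3s]
    linarith
  rw [h12eq, h8eq, hinv]
  exact core_bound b (Real.exp (-z)) hb0 hb3 (Real.exp_pos _) hu
end

section
/- Let d ≥ 1, let 0 < δ ≤ d and 0 < c_A < ∞, and let A ⊆ ℝ^d be a bounded set such that lim_{ρ→0+} ρ^δ N_ρ(A) = c_A. Let D ≥ 1 be a real constant and, for all n large enough that N_1(nA) ≥ 2, set ρ_n = D / log N_1(nA), where nA = {n x : x ∈ A}. Then lim_{n→∞} (D / (n log n))^δ · N_{ρ_n}(nA) = δ^δ · c_A. -/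
open Filter Topology Real

section Scaling

variable {E : Type*} [NormedAddCommGroup E] [NormedSpace ℝ E]

lemma isSep_smul {c : ℝ} (hc : 0 < c) {ρ : ℝ} {S : Set E}
    (h : IsSep (ρ / c) S) : IsSep ρ ((fun x => c • x) '' S) := by
  rintro _ ⟨x, hx, rfl⟩ _ ⟨y, hy, rfl⟩ hne
  have hxy : x ≠ y := fun h' => hne (by rw [h'])
  have h1 := h x hx y hy hxy
  have h2 : dist (c • x) (c • y) = c * dist x y := by
    rw [dist_smul₀, Real.norm_eq_abs, abs_of_pos hc]
  rw [h2]
  exact (div_le_iff₀' hc).mp h1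

lemma packNum_smul (c : ℝ) (hc : 0 < c) (ρ : ℝ) (A : Set E) :
    packNum ρ ((fun x => c • x) '' A) = packNum (ρ / c) A := by
  classical
  have hinj : Function.Injective (fun x : E => c • x) :=
    smul_right_injective E hc.ne'
  have hinj' : Function.Injective (fun x : E => c⁻¹ • x) :=
    smul_right_injective E (inv_ne_zero hc.ne')
  unfold packNum
  congr 1
  ext n
  constructor
  · rintro ⟨S, hS, hsep, rfl⟩
    refine ⟨S.image (fun x => c⁻¹ • x), ?_, ?_, Finset.card_image_of_injective _ hinj'⟩
    · intro x hx
      simp only [Finset.coe_image, Set.mem_image, Finset.mem_coe] at hx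
      obtain ⟨y, hy, rfl⟩ := hx
      obtain ⟨a, ha, rfl⟩ := hS hy
      simpa [smul_smul, inv_mul_cancel₀ hc.ne'] using ha
    · have key : IsSep (ρ / c) ((fun x => c⁻¹ • x) '' (S : Set E)) := by
        apply isSep_smul (inv_pos.2 hc)
        have heq : ρ / c / c⁻¹ = ρ := by field_simp
        rwa [heq]
      rw [Finset.coe_image]
      exact key
  · rintro ⟨S, hS, hsep, rfl⟩
    refine ⟨S.image (fun x => c • x), ?_, ?_, Finset.card_image_of_injective _ hinj⟩
    · rw [Finset.coe_image]
      exact Set.image_mono hS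
    · rw [Finset.coe_image]
      exact isSep_smul hc hsep

end Scaling

/-- If ρ^δ N_ρ(A) → c_A ∈ (0,∞) as ρ → 0+, D ≥ 1 and ρₙ = D / log N₁(nA), then
(D/(n log n))^δ · N_{ρₙ}(nA) → δ^δ · c_A as n → ∞. -/
theorem stmt19 (d : ℕ) (hd : 1 ≤ d) (δ : ℝ) (hδ0 : 0 < δ) (hδd : δ ≤ d)
    (cA : ℝ) (hcA0 : 0 < cA)
    (A : Set (EuclideanSpace ℝ (Fin d))) (hA : Bornology.IsBounded A)
    (hlim : Filter.Tendsto (fun ρ : ℝ => ρ ^ δ * (packNum ρ A : ℝ))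
      (nhdsWithin 0 (Set.Ioi 0)) (nhds cA))
    (D : ℝ) (hD : 1 ≤ D)
    (ρ : ℕ → ℝ)
    (hρ : ∀ n : ℕ, 2 ≤ packNum 1 ((fun x => (n : ℝ) • x) '' A) →
      ρ n = D / Real.log (packNum 1 ((fun x => (n : ℝ) • x) '' A))) :
    Filter.Tendsto
      (fun n : ℕ =>
        (D / ((n : ℝ) * Real.log n)) ^ δ *
          (packNum (ρ n) ((fun x => (n : ℝ) • x) '' A) : ℝ))
      Filter.atTop (nhds (δ ^ δ * cA)) := by
  have hD0 : 0 < D := lt_of_lt_of_le one_pos hD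
  -- Nr r = (packNum r A : ℝ)
  set Nr : ℝ → ℝ := fun r => (packNum r A : ℝ) with hNr
  -- v n = 1 / n
  set v : ℕ → ℝ := fun n => 1 / (n : ℝ) with hv
  have hv_pos : ∀ᶠ n : ℕ in atTop, 0 < v n := by
    filter_upwards [eventually_ge_atTop 1] with n hn
    have : (0:ℝ) < n := by exact_mod_cast hn
    positivity
  have hv_tendsto : Tendsto v atTop (𝓝[>] 0) := by
    rw [tendsto_nhdsWithin_iff]
    exact ⟨tendsto_one_div_atTop_nhds_zero_nat, hv_pos⟩
  -- composition: (v n)^δ * Nr (v n) → cA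
  have hcomp : Tendsto (fun n => v n ^ δ * Nr (v n)) atTop (𝓝 cA) :=
    hlim.comp hv_tendsto
  -- v^δ → 0 within Ioi 0
  have hvδ : Tendsto (fun n => v n ^ δ) atTop (𝓝[>] 0) := by
    rw [tendsto_nhdsWithin_iff]
    constructor
    · have h0 : Tendsto v atTop (𝓝 0) := tendsto_one_div_atTop_nhds_zero_nat
      have := h0.rpow (tendsto_const_nhds (x := δ)) (Or.inr hδ0)
      simpa [Real.zero_rpow hδ0.ne'] using this
    · filter_upwards [hv_pos] with n hn
      exact Real.rpow_pos_of_pos hn δ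
  -- Nr (v n) → ∞
  have hN_top : Tendsto (fun n => Nr (v n)) atTop atTop := by
    have h1 : Tendsto (fun n => (v n ^ δ * Nr (v n)) * (v n ^ δ)⁻¹) atTop atTop :=
      hcomp.pos_mul_atTop hcA0 hvδ.inv_tendsto_nhdsGT_zero
    apply h1.congr'
    filter_upwards [hv_pos] with n hn
    have : v n ^ δ ≠ 0 := (Real.rpow_pos_of_pos hn δ).ne'
    field_simp
  -- eventually packNum 1 (nA) = packNum (v n) A and ≥ 2
  have hscale : ∀ᶠ n : ℕ in atTop, ∀ r : ℝ,
      packNum r ((fun x => (n : ℝ) • x) '' A) = packNum (r / n) A := by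
    filter_upwards [eventually_ge_atTop 1] with n hn r
    exact packNum_smul (n : ℝ) (by exact_mod_cast hn) r A
  have hN2 : ∀ᶠ n : ℕ in atTop, (2 : ℝ) ≤ Nr (v n) :=
    hN_top.eventually_ge_atTop 2
  have hpack2 : ∀ᶠ n : ℕ in atTop,
      2 ≤ packNum 1 ((fun x => (n : ℝ) • x) '' A) := by
    filter_upwards [hscale, hN2] with n h1 h2
    rw [h1 1]
    have h2' : (2:ℝ) ≤ (packNum (1 / (n:ℝ)) A : ℝ) := h2
    exact_mod_cast h2'
  -- L n = log (Nr (v n))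
  set L : ℕ → ℝ := fun n => Real.log (Nr (v n)) with hL
  have hL_top : Tendsto L atTop atTop := tendsto_log_atTop.comp hN_top
  have hL_pos : ∀ᶠ n : ℕ in atTop, 0 < L n := hL_top.eventually_gt_atTop 0
  -- L n - δ log n → log cA
  have hlog : Tendsto (fun n => L n - δ * Real.log n) atTop (𝓝 (Real.log cA)) := by
    have h1 : Tendsto (fun n => Real.log (v n ^ δ * Nr (v n))) atTop (𝓝 (Real.log cA)) :=
      hcomp.log hcA0.ne'
    apply h1.congr'
    filter_upwards [hv_pos, hN2, eventually_ge_atTop 1] with n hvn hNn hn1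
    have hNpos : (0:ℝ) < Nr (v n) := lt_of_lt_of_le two_pos hNn
    rw [Real.log_mul (Real.rpow_pos_of_pos hvn δ).ne' hNpos.ne',
      Real.log_rpow hvn]
    have hnn : (0:ℝ) < (n:ℝ) := by exact_mod_cast hn1
    have hlv : Real.log (v n) = -Real.log n := by
      rw [hv]; simp [Real.log_inv]
    have hLd : Real.log (Nr (v n)) = L n := rfl
    rw [hlv, hLd]
    ring
  -- L n / log n → δ
  have hlogn_top : Tendsto (fun n : ℕ => Real.log n) atTop atTop :=
    tendsto_log_atTop.comp tendsto_natCast_atTop_atTop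
  have hratio : Tendsto (fun n => L n / Real.log n) atTop (𝓝 δ) := by
    have h1 : Tendsto (fun n => (L n - δ * Real.log n) / Real.log n) atTop (𝓝 0) :=
      hlog.div_atTop hlogn_top
    have h2 : Tendsto (fun n => (L n - δ * Real.log n) / Real.log n + δ) atTop (𝓝 (0 + δ)) :=
      h1.add tendsto_const_nhds
    rw [zero_add] at h2
    apply h2.congr'
    filter_upwards [hlogn_top.eventually_gt_atTop 0] with n hn
    rw [sub_div, mul_div_assoc, div_self hn.ne', mul_one, sub_add_cancel]
  -- u n = D / (n * L n)
  set u : ℕ → ℝ := fun n => D / ((n : ℝ) * L n) with hu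
  have hnat : Tendsto (fun n : ℕ => (n : ℝ)) atTop atTop := tendsto_natCast_atTop_atTop
  have hnL_top : Tendsto (fun n : ℕ => (n : ℝ) * L n) atTop atTop :=
    Filter.Tendsto.atTop_mul_atTop₀ hnat hL_top
  have hu_pos : ∀ᶠ n : ℕ in atTop, 0 < u n := by
    filter_upwards [hnL_top.eventually_gt_atTop 0] with n hn
    exact div_pos hD0 hn
  have hu_tendsto : Tendsto u atTop (𝓝[>] 0) := by
    rw [tendsto_nhdsWithin_iff]
    exact ⟨tendsto_const_nhds.div_atTop hnL_top, hu_pos⟩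
  have hucomp : Tendsto (fun n => u n ^ δ * Nr (u n)) atTop (𝓝 cA) :=
    hlim.comp hu_tendsto
  -- ratio^δ → δ^δ
  have hratioδ : Tendsto (fun n => (L n / Real.log n) ^ δ) atTop (𝓝 (δ ^ δ)) :=
    hratio.rpow tendsto_const_nhds (Or.inl hδ0.ne')
  have hfinal : Tendsto (fun n => (L n / Real.log n) ^ δ * (u n ^ δ * Nr (u n)))
      atTop (𝓝 (δ ^ δ * cA)) := hratioδ.mul hucomp
  apply hfinal.congr'
  filter_upwards [hscale, hpack2, hL_pos, hu_pos, hlogn_top.eventually_gt_atTop 0,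
    eventually_ge_atTop 1] with n hsc hp2 hLn hun hln hn1
  have hnn : (0:ℝ) < (n:ℝ) := by exact_mod_cast hn1
  -- rewrite ρ n
  have hρn : ρ n = D / L n := by
    rw [hρ n hp2, hsc 1]
  have hpackeq : (packNum (ρ n) ((fun x => (n : ℝ) • x) '' A) : ℝ) = Nr (u n) := by
    rw [hsc (ρ n), hρn]
    have : D / L n / (n : ℝ) = u n := by
      rw [hu, div_div, mul_comm]
    rw [this]
  have hDeq : D / ((n : ℝ) * Real.log n) = (L n / Real.log n) * u n := by
    rw [hu]
    field_simp
  rw [hpackeq, hDeq, Real.mul_rpow (by positivity) hun.le, mul_assoc]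
end
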